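/- Let n ≥ 1 and let F_1, …, F_n : ℝ^d → ℝ^d be arbitrary operators with average F = (1/n)∑_{i=1}^n F_i. Then for every k ∈ {1, …, K}, the SARAH inner-loop trajectory satisfies the exact identity 𝔼[‖F(z^k) − v^k‖²] = 𝔼[‖F(z^{k−1}) − v^{k−1}‖²] − 𝔼[‖F(z^k) − F(z^{k−1})‖²] + 𝔼[‖v^k − v^{k−1}‖²]. -/

import Mathlib

open Finset

noncomputable section

/-- An operator `G : ℝ^d → ℝ^d` is `ℓ`-cocoercive:
`‖G(u) - G(v)‖² ≤ ℓ ⟨G(u) - G(v), u - v⟩` for all `u, v`. -/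
def Cocoercive {d : ℕ} (ℓ : ℝ)
    (G : EuclideanSpace ℝ (Fin d) → EuclideanSpace ℝ (Fin d)) : Prop :=
  ∀ u v : EuclideanSpace ℝ (Fin d),
    ‖G u - G v‖ ^ 2 ≤ ℓ * (inner ℝ (G u - G v) (u - v) : ℝ)

/-- An operator `G : ℝ^d → ℝ^d` is `μ`-strongly monotone:
`⟨G(u) - G(v), u - v⟩ ≥ μ ‖u - v‖²` for all `u, v`. -/
def StronglyMonotone {d : ℕ} (μ : ℝ)
    (G : EuclideanSpace ℝ (Fin d) → EuclideanSpace ℝ (Fin d)) : Prop :=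
  ∀ u v : EuclideanSpace ℝ (Fin d),
    μ * ‖u - v‖ ^ 2 ≤ (inner ℝ (G u - G v) (u - v) : ℝ)

/-- The average operator `F = (1/n) ∑_{i=1}^n F_i`. -/
def opAvg {d n : ℕ} (F : Fin n → EuclideanSpace ℝ (Fin d) → EuclideanSpace ℝ (Fin d)) :
    EuclideanSpace ℝ (Fin d) → EuclideanSpace ℝ (Fin d) :=
  fun z => (n : ℝ)⁻¹ • ∑ i, F i z

/-- One step of the SARAH recursion: from `(z, v)` and index `i`, go to `(z', v')`
with `z' = z - γ v` and `v' = F_i(z') - F_i(z) + v`. -/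
def sarahStep {d n : ℕ} (γ : ℝ)
    (F : Fin n → EuclideanSpace ℝ (Fin d) → EuclideanSpace ℝ (Fin d)) (i : Fin n)
    (p : EuclideanSpace ℝ (Fin d) × EuclideanSpace ℝ (Fin d)) :
    EuclideanSpace ℝ (Fin d) × EuclideanSpace ℝ (Fin d) :=
  (p.1 - γ • p.2, F i (p.1 - γ • p.2) - F i p.1 + p.2)

/-- Run SARAH steps along a list of indices. -/
def sarahRun {d n : ℕ} (γ : ℝ)
    (F : Fin n → EuclideanSpace ℝ (Fin d) → EuclideanSpace ℝ (Fin d)) :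
    EuclideanSpace ℝ (Fin d) × EuclideanSpace ℝ (Fin d) → List (Fin n) →
      EuclideanSpace ℝ (Fin d) × EuclideanSpace ℝ (Fin d)
  | p, [] => p
  | p, i :: l => sarahRun γ F (sarahStep γ F i p) l

/-- The SARAH inner-loop trajectory `(z^k, v^k)` started at `z^0 = z0` with
`v^0 = F(z^0)`, for the index sequence `j : Fin K → Fin n` (so `i_k = j (k-1)`):
`sarahTraj γ F z0 j k = (z^k, v^k)` is obtained by performing the SARAH steps
with the first `k` indices `i_1, …, i_k`. -/
def sarahTraj {d n K : ℕ} (γ : ℝ)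
    (F : Fin n → EuclideanSpace ℝ (Fin d) → EuclideanSpace ℝ (Fin d))
    (z0 : EuclideanSpace ℝ (Fin d)) (j : Fin K → Fin n) (k : ℕ) :
    EuclideanSpace ℝ (Fin d) × EuclideanSpace ℝ (Fin d) :=
  sarahRun γ F (z0, opAvg F z0) ((List.ofFn j).take k)

private lemma sarahRun_append {d n : ℕ} (γ : ℝ)
    (F : Fin n → EuclideanSpace ℝ (Fin d) → EuclideanSpace ℝ (Fin d))
    (p : EuclideanSpace ℝ (Fin d) × EuclideanSpace ℝ (Fin d)) (l₁ l₂ : List (Fin n)) :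
    sarahRun γ F p (l₁ ++ l₂) = sarahRun γ F (sarahRun γ F p l₁) l₂ := by
  induction l₁ generalizing p with
  | nil => rfl
  | cons i l ih => simp [sarahRun, ih]

private lemma sarahTraj_succ {d n K : ℕ} (γ : ℝ)
    (F : Fin n → EuclideanSpace ℝ (Fin d) → EuclideanSpace ℝ (Fin d))
    (z0 : EuclideanSpace ℝ (Fin d)) (j : Fin K → Fin n) (m : ℕ) (h : m < K) :
    sarahTraj γ F z0 j (m + 1) = sarahStep γ F (j ⟨m, h⟩) (sarahTraj γ F z0 j m) := by
  unfold sarahTraj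
  have : (List.ofFn j).take (m + 1) = (List.ofFn j).take m ++ [j ⟨m, h⟩] := by
    rw [List.take_succ]
    simp [List.getElem?_ofFn, h]
  rw [this, sarahRun_append]
  rfl

private lemma sarahTraj_update {d n K : ℕ} (γ : ℝ)
    (F : Fin n → EuclideanSpace ℝ (Fin d) → EuclideanSpace ℝ (Fin d))
    (z0 : EuclideanSpace ℝ (Fin d)) (j : Fin K → Fin n) (a : Fin n) (pos : Fin K)
    (m : ℕ) (h : m ≤ pos.val) :
    sarahTraj γ F z0 (Function.update j pos a) m = sarahTraj γ F z0 j m := by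
  unfold sarahTraj
  congr 1
  apply List.ext_getElem <;> simp
  intro i hi hi2 _ _
  rw [Function.update_of_ne]
  intro hc
  have : i = pos.val := by rw [← hc]
  omega

private lemma norm_id' {E : Type*} [NormedAddCommGroup E] [InnerProductSpace ℝ E] (b c e : E) :
    ‖b + c - e‖ ^ 2 = ‖b‖ ^ 2 - ‖c‖ ^ 2 + ‖e‖ ^ 2 + 2 * (inner ℝ (c - e) (b + c) : ℝ) := by
  simp only [← real_inner_self_eq_norm_sq, inner_sub_left, inner_sub_right, inner_add_left,
    inner_add_right, real_inner_comm b c, real_inner_comm b e, real_inner_comm c e]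
  ring

/-- **Exact per-step variance identity.** For arbitrary operators `F_i` with average
`F`, for every `k ∈ {1, …, K}` the SARAH inner loop satisfies the exact identity
`𝔼[‖F(z^k) - v^k‖²] = 𝔼[‖F(z^{k-1}) - v^{k-1}‖²] - 𝔼[‖F(z^k) - F(z^{k-1})‖²]
  + 𝔼[‖v^k - v^{k-1}‖²]`,
where the expectation is the uniform average over all `n^K` index sequences. -/
theorem sarah_step_variance_identity {d n : ℕ} (hn : 1 ≤ n)
    (F : Fin n → EuclideanSpace ℝ (Fin d) → EuclideanSpace ℝ (Fin d))
    (γ : ℝ) (hγ0 : 0 < γ)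
    (K : ℕ) (hK : 1 ≤ K) (z0 : EuclideanSpace ℝ (Fin d))
    (k : ℕ) (hk1 : 1 ≤ k) (hkK : k ≤ K) :
    (∑ j : Fin K → Fin n,
        ‖opAvg F (sarahTraj γ F z0 j k).1 - (sarahTraj γ F z0 j k).2‖ ^ 2) / (n : ℝ) ^ K
      = (∑ j : Fin K → Fin n,
          ‖opAvg F (sarahTraj γ F z0 j (k - 1)).1 - (sarahTraj γ F z0 j (k - 1)).2‖ ^ 2)
            / (n : ℝ) ^ K
        - (∑ j : Fin K → Fin n,
            ‖opAvg F (sarahTraj γ F z0 j k).1 - opAvg F (sarahTraj γ F z0 j (k - 1)).1‖ ^ 2)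
            / (n : ℝ) ^ K
        + (∑ j : Fin K → Fin n,
            ‖(sarahTraj γ F z0 j k).2 - (sarahTraj γ F z0 j (k - 1)).2‖ ^ 2)
            / (n : ℝ) ^ K := by
  have hkpos : k - 1 < K := by omega
  set pos : Fin K := ⟨k - 1, hkpos⟩ with hpos
  have step : ∀ j : Fin K → Fin n,
      sarahTraj γ F z0 j k = sarahStep γ F (j pos) (sarahTraj γ F z0 j (k - 1)) := by
    intro j
    have hkk : k = (k - 1) + 1 := by omega
    rw [hkk]
    exact sarahTraj_succ γ F z0 j (k - 1) hkpos
  -- cross term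
  set cross : (Fin K → Fin n) → ℝ := fun j =>
    (inner ℝ ((opAvg F (sarahTraj γ F z0 j k).1 - opAvg F (sarahTraj γ F z0 j (k - 1)).1)
          - ((sarahTraj γ F z0 j k).2 - (sarahTraj γ F z0 j (k - 1)).2))
        (opAvg F (sarahTraj γ F z0 j k).1 - (sarahTraj γ F z0 j (k - 1)).2) : ℝ) with hcrossdef
  have hptw : ∀ j : Fin K → Fin n,
      ‖opAvg F (sarahTraj γ F z0 j k).1 - (sarahTraj γ F z0 j k).2‖ ^ 2
        = ‖opAvg F (sarahTraj γ F z0 j (k - 1)).1 - (sarahTraj γ F z0 j (k - 1)).2‖ ^ 2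
          - ‖opAvg F (sarahTraj γ F z0 j k).1 - opAvg F (sarahTraj γ F z0 j (k - 1)).1‖ ^ 2
          + ‖(sarahTraj γ F z0 j k).2 - (sarahTraj γ F z0 j (k - 1)).2‖ ^ 2
          + 2 * cross j := by
    intro j
    simp only [hcrossdef]
    rw [step j]
    set q := sarahTraj γ F z0 j (k - 1) with hq
    simp only [sarahStep]
    set z' := q.1 - γ • q.2 with hz'
    have hA : opAvg F z' - (F (j pos) z' - F (j pos) q.1 + q.2)
        = (opAvg F q.1 - q.2) + (opAvg F z' - opAvg F q.1)
          - (F (j pos) z' - F (j pos) q.1) := by abel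
    have hD : (F (j pos) z' - F (j pos) q.1 + q.2) - q.2
        = F (j pos) z' - F (j pos) q.1 := by abel
    have hBC : (opAvg F q.1 - q.2) + (opAvg F z' - opAvg F q.1) = opAvg F z' - q.2 := by abel
    rw [hA, hD, ← hBC]
    exact norm_id' _ _ _
  have navg : ∀ z : EuclideanSpace ℝ (Fin d), (n : ℝ) • opAvg F z = ∑ i, F i z := by
    intro z
    rw [opAvg, smul_smul, mul_inv_cancel₀, one_smul]
    exact_mod_cast Nat.pos_of_ne_zero (by omega) |>.ne'
  have hcross : ∑ j : Fin K → Fin n, cross j = 0 := by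
    rw [← Equiv.sum_comp (Equiv.funSplitAt pos (Fin n)).symm cross]
    rw [Fintype.sum_prod_type, Finset.sum_comm]
    apply Finset.sum_eq_zero
    intro g _
    set i0 : Fin n := ⟨0, hn⟩ with hi0
    set j0 : Fin K → Fin n := (Equiv.funSplitAt pos (Fin n)).symm (i0, g) with hj0
    have hupd : ∀ a : Fin n,
        (Equiv.funSplitAt pos (Fin n)).symm (a, g) = Function.update j0 pos a := by
      intro a
      funext x
      by_cases hx : x = pos
      · subst hx; simp [hj0, Equiv.funSplitAt_symm_apply]
      · simp [hj0, Equiv.funSplitAt_symm_apply, hx, Function.update_of_ne hx]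
    have hqa : ∀ a : Fin n,
        sarahTraj γ F z0 (Function.update j0 pos a) (k - 1) = sarahTraj γ F z0 j0 (k - 1) :=
      fun a => sarahTraj_update γ F z0 j0 a pos (k - 1) le_rfl
    set q0 := sarahTraj γ F z0 j0 (k - 1) with hq0
    set z' := q0.1 - γ • q0.2 with hz'
    have hcr : ∀ a : Fin n, cross (Function.update j0 pos a)
        = (inner ℝ ((opAvg F z' - opAvg F q0.1) - (F a z' - F a q0.1))
            (opAvg F z' - q0.2) : ℝ) := by
      intro a
      simp only [hcrossdef]
      rw [step, hqa a, Function.update_self]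
      simp only [sarahStep, ← hq0, ← hz']
      congr 1
      abel
    calc ∑ a : Fin n, cross ((Equiv.funSplitAt pos (Fin n)).symm (a, g))
        = ∑ a : Fin n, (inner ℝ ((opAvg F z' - opAvg F q0.1) - (F a z' - F a q0.1))
            (opAvg F z' - q0.2) : ℝ) := by
          refine Finset.sum_congr rfl fun a _ => ?_
          rw [hupd a, hcr a]
      _ = (inner ℝ (∑ a : Fin n, ((opAvg F z' - opAvg F q0.1) - (F a z' - F a q0.1)))
            (opAvg F z' - q0.2) : ℝ) := by rw [sum_inner]
      _ = 0 := by
          have : ∑ a : Fin n, ((opAvg F z' - opAvg F q0.1) - (F a z' - F a q0.1))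
              = 0 := by
            rw [Finset.sum_sub_distrib, Finset.sum_const, Finset.card_univ, Fintype.card_fin,
              Finset.sum_sub_distrib, ← navg, ← navg]
            rw [← Nat.cast_smul_eq_nsmul ℝ]
            rw [smul_sub]
            abel
          rw [this, inner_zero_left]
  have hsum : (∑ j : Fin K → Fin n,
        ‖opAvg F (sarahTraj γ F z0 j k).1 - (sarahTraj γ F z0 j k).2‖ ^ 2)
      = (∑ j : Fin K → Fin n,
          ‖opAvg F (sarahTraj γ F z0 j (k - 1)).1 - (sarahTraj γ F z0 j (k - 1)).2‖ ^ 2)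
        - (∑ j : Fin K → Fin n,
            ‖opAvg F (sarahTraj γ F z0 j k).1 - opAvg F (sarahTraj γ F z0 j (k - 1)).1‖ ^ 2)
        + (∑ j : Fin K → Fin n,
            ‖(sarahTraj γ F z0 j k).2 - (sarahTraj γ F z0 j (k - 1)).2‖ ^ 2) := by
    calc (∑ j : Fin K → Fin n,
          ‖opAvg F (sarahTraj γ F z0 j k).1 - (sarahTraj γ F z0 j k).2‖ ^ 2)
        = ∑ j : Fin K → Fin n,
            (‖opAvg F (sarahTraj γ F z0 j (k - 1)).1 - (sarahTraj γ F z0 j (k - 1)).2‖ ^ 2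
              - ‖opAvg F (sarahTraj γ F z0 j k).1 - opAvg F (sarahTraj γ F z0 j (k - 1)).1‖ ^ 2
              + ‖(sarahTraj γ F z0 j k).2 - (sarahTraj γ F z0 j (k - 1)).2‖ ^ 2
              + 2 * cross j) := Finset.sum_congr rfl fun j _ => hptw j
      _ = _ := by
          rw [Finset.sum_add_distrib, Finset.sum_add_distrib, Finset.sum_sub_distrib,
            ← Finset.mul_sum, hcross]
          ring
  rw [hsum]
  ring

end
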